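/- Let s : I → ℝ be real analytic on an open interval I ∋ a, satisfying 2·s·s'' − (s')² = s²·(3s + 2t)·(s + 2t) on I, with s(a) = 0 and s''(a) = 0. Then s is identically zero on I. -/

import Mathlib

open Set Filter Metric

theorem stmt_14 (I : Set ℝ) (hI : IsOpen I) (hI' : IsPreconnected I) (s : ℝ → ℝ) (a : ℝ)
    (ha : a ∈ I) (hs : AnalyticOnNhd ℝ s I)
    (heq : ∀ t ∈ I, 2 * s t * deriv (deriv s) t - (deriv s t) ^ 2
      = (s t) ^ 2 * (3 * s t + 2 * t) * (s t + 2 * t))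
    (h0 : s a = 0) (h2 : deriv (deriv s) a = 0) :
    ∀ t ∈ I, s t = 0 := by
  -- abbreviations for derivatives
  have hs1 : AnalyticOnNhd ℝ (deriv s) I := hs.deriv
  have hs2 : AnalyticOnNhd ℝ (deriv (deriv s)) I := hs1.deriv
  have hs3 : AnalyticOnNhd ℝ (deriv (deriv (deriv s))) I := hs2.deriv
  have hdiffs : ∀ t ∈ I, HasDerivAt s (deriv s t) t :=
    fun t ht => ((hs t ht).differentiableAt).hasDerivAt
  have hdiff1 : ∀ t ∈ I, HasDerivAt (deriv s) (deriv (deriv s) t) t :=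
    fun t ht => ((hs1 t ht).differentiableAt).hasDerivAt
  have hdiff2 : ∀ t ∈ I, HasDerivAt (deriv (deriv s)) (deriv (deriv (deriv s)) t) t :=
    fun t ht => ((hs2 t ht).differentiableAt).hasDerivAt
  -- the differentiated equation: s * w = 0 on I
  set w : ℝ → ℝ := fun t => 2 * deriv (deriv (deriv s)) t
      - 2 * deriv s t * ((3 * s t + 2 * t) * (s t + 2 * t))
      - s t * ((3 * deriv s t + 2) * (s t + 2 * t) + (3 * s t + 2 * t) * (deriv s t + 2))
    with hw_def
  have hsw : ∀ t ∈ I, s t * w t = 0 := by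
    intro t ht
    have hL : HasDerivAt (fun u => 2 * s u * deriv (deriv s) u - (deriv s u) ^ 2)
        (2 * deriv s t * deriv (deriv s) t + 2 * s t * deriv (deriv (deriv s)) t
          - (2 : ℕ) * deriv s t ^ (2 - 1) * deriv (deriv s) t) t := by
      exact (((hdiffs t ht).const_mul 2).mul (hdiff2 t ht)).sub ((hdiff1 t ht).pow 2)
    have hA : HasDerivAt (fun u => 3 * s u + 2 * u) (3 * deriv s t + 2 * 1) t :=
      ((hdiffs t ht).const_mul 3).add ((hasDerivAt_id t).const_mul 2)
    have hB : HasDerivAt (fun u => s u + 2 * u) (deriv s t + 2 * 1) t :=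
      (hdiffs t ht).add ((hasDerivAt_id t).const_mul 2)
    have hsq : HasDerivAt (fun u => s u ^ 2) ((2 : ℕ) * s t ^ (2 - 1) * deriv s t) t :=
      (hdiffs t ht).pow 2
    have hR : HasDerivAt (fun u => s u ^ 2 * (3 * s u + 2 * u) * (s u + 2 * u))
        ((((2 : ℕ) * s t ^ (2 - 1) * deriv s t) * (3 * s t + 2 * t)
            + s t ^ 2 * (3 * deriv s t + 2 * 1)) * (s t + 2 * t)
          + s t ^ 2 * (3 * s t + 2 * t) * (deriv s t + 2 * 1)) t :=
      (hsq.mul hA).mul hB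
    have hee : deriv (fun u => 2 * s u * deriv (deriv s) u - (deriv s u) ^ 2) t
        = deriv (fun u => s u ^ 2 * (3 * s u + 2 * u) * (s u + 2 * u)) t :=
      Filter.EventuallyEq.deriv_eq (Filter.eventuallyEq_of_mem (hI.mem_nhds ht) heq)
    rw [hL.deriv, hR.deriv] at hee
    simp only [hw_def]
    push_cast at hee ⊢
    linear_combination hee
  -- the goal reduces to showing s vanishes near a
  suffices hev : s =ᶠ[nhds a] 0 by
    have := hs.eqOn_zero_of_preconnected_of_eventuallyEq_zero hI' ha hev
    exact fun t ht => this ht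
  -- first derivative also vanishes at a
  have h1 : deriv s a = 0 := by
    have h := heq a ha
    rw [h0, h2] at h
    have hsq : deriv s a ^ 2 = 0 := by linarith [h]
    exact pow_eq_zero_iff (n := 2) (by norm_num) |>.mp hsq
  -- case split on isolated zeros
  rcases (hs a ha).eventually_eq_zero_or_eventually_ne_zero with hcase | hcase
  · exact hcase
  -- in the second case, w vanishes near a
  have hwa : AnalyticAt ℝ w a := by
    have h0a := hs a ha
    have h1a := hs1 a ha
    have h3a := hs3 a ha
    have hid : AnalyticAt ℝ (fun t : ℝ => t) a := analyticAt_id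
    exact ((analyticAt_const.mul h3a).sub
        ((analyticAt_const.mul h1a).mul
          (((analyticAt_const.mul h0a).add (analyticAt_const.mul hid)).mul
            (h0a.add (analyticAt_const.mul hid))))).sub
      (h0a.mul
        ((((analyticAt_const.mul h1a).add analyticAt_const).mul
            (h0a.add (analyticAt_const.mul hid))).add
          (((analyticAt_const.mul h0a).add (analyticAt_const.mul hid)).mul
            (h1a.add analyticAt_const))))
  have hwfreq : ∃ᶠ t in nhdsWithin a {a}ᶜ, w t = 0 := by
    have hIev : ∀ᶠ t in nhdsWithin a {a}ᶜ, s t * w t = 0 :=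
      eventually_nhdsWithin_of_eventually_nhds (Filter.eventually_of_mem (hI.mem_nhds ha) hsw)
    exact ((hcase.and hIev).mono fun t ⟨hne, hprod⟩ =>
      (mul_eq_zero.mp hprod).resolve_left hne).frequently
  have hw0 : ∀ᶠ t in nhds a, w t = 0 ∧ t ∈ I := by
    have := hwa.frequently_zero_iff_eventually_zero.mp hwfreq
    exact this.and (Filter.eventually_of_mem (hI.mem_nhds ha) fun x hx => hx)
  obtain ⟨ε, hε, hball⟩ := Metric.eventually_nhds_iff_ball.mp hw0
  -- set up the ODE
  set lo := a - ε / 2 with hlo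
  set hi := a + ε / 2 with hhi
  have hlohi : lo ≤ hi := by simp only [hlo, hhi]; linarith
  have hIcc_ball : Icc lo hi ⊆ ball a ε := by
    intro t ht
    simp only [mem_ball, Real.dist_eq]
    rw [abs_sub_lt_iff]
    constructor <;> [skip; skip] <;>
      · simp only [hlo, hhi] at ht; rcases ht with ⟨h1', h2'⟩; linarith
  have hIccI : Icc lo hi ⊆ I := fun t ht => (hball t (hIcc_ball ht)).2
  set π : ℝ → ℝ := fun t => min (max t lo) hi with hπ
  have hπmem : ∀ t, π t ∈ Icc lo hi := fun t =>
    ⟨le_min (le_max_right t lo) hlohi, min_le_right _ _⟩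
  have hπid : ∀ t ∈ Icc lo hi, π t = t := by
    intro t ht
    simp only [hπ, max_eq_left ht.1, min_eq_left ht.2]
  set c1 : ℝ → ℝ := fun t => (3 * s t + 2 * t) * (s t + 2 * t) with hc1
  set c2 : ℝ → ℝ := fun t =>
    ((3 * deriv s t + 2) * (s t + 2 * t) + (3 * s t + 2 * t) * (deriv s t + 2)) / 2 with hc2
  have hsc : ContinuousOn s (Icc lo hi) := (hs.continuousOn).mono hIccI
  have hd1c : ContinuousOn (deriv s) (Icc lo hi) := (hs1.continuousOn).mono hIccI
  have hc1c : ContinuousOn c1 (Icc lo hi) := by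
    apply ContinuousOn.mul
    · exact (continuousOn_const.mul hsc).add (continuousOn_const.mul continuousOn_id)
    · exact hsc.add (continuousOn_const.mul continuousOn_id)
  have hc2c : ContinuousOn c2 (Icc lo hi) := by
    apply ContinuousOn.div_const
    apply ContinuousOn.add
    · exact ((continuousOn_const.mul hd1c).add continuousOn_const).mul
        (hsc.add (continuousOn_const.mul continuousOn_id))
    · exact ((continuousOn_const.mul hsc).add (continuousOn_const.mul continuousOn_id)).mul
        (hd1c.add continuousOn_const)
  obtain ⟨C, hC⟩ := isCompact_Icc.exists_bound_of_continuousOn (hc1c.prodMk hc2c)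
  have haIcc : a ∈ Icc lo hi := ⟨by simp only [hlo]; linarith, by simp only [hhi]; linarith⟩
  have hC0 : 0 ≤ C := le_trans (norm_nonneg _) (hC a haIcc)
  have hC1 : ∀ x ∈ Icc lo hi, |c1 x| ≤ C := fun x hx => by
    have := (norm_fst_le ((c1 x, c2 x) : ℝ × ℝ)).trans (hC x hx)
    simpa [Real.norm_eq_abs] using this
  have hC2 : ∀ x ∈ Icc lo hi, |c2 x| ≤ C := fun x hx => by
    have := (norm_snd_le ((c1 x, c2 x) : ℝ × ℝ)).trans (hC x hx)
    simpa [Real.norm_eq_abs] using this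
  set K : NNReal := ⟨1 + 2 * C, by linarith⟩ with hK
  set v : ℝ → ℝ × ℝ × ℝ → ℝ × ℝ × ℝ := fun t x =>
    (x.2.1, x.2.2, c1 (π t) * x.2.1 + c2 (π t) * x.1) with hv_def
  have hlip : ∀ t, LipschitzWith K (v t) := by
    intro t
    apply LipschitzWith.of_dist_le_mul
    intro x y
    set D := dist x y with hD
    have hdle : dist x y = max (dist x.1 y.1) (max (dist x.2.1 y.2.1) (dist x.2.2 y.2.2)) := by
      rw [Prod.dist_eq, Prod.dist_eq]
    have hd1' : dist x.1 y.1 ≤ D := by rw [hD, hdle]; exact le_max_left _ _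
    have hd21 : dist x.2.1 y.2.1 ≤ D := by
      rw [hD, hdle]; exact le_trans (le_max_left _ _) (le_max_right _ _)
    have hd22 : dist x.2.2 y.2.2 ≤ D := by
      rw [hD, hdle]; exact le_trans (le_max_right _ _) (le_max_right _ _)
    have hdist0 : (0 : ℝ) ≤ D := dist_nonneg
    have hKD : (K : ℝ) = 1 + 2 * C := rfl
    rw [hKD, hv_def]
    show max _ (max _ _) ≤ _
    simp only [Prod.dist_eq]
    apply max_le
    · nlinarith [hd21]
    apply max_le
    · nlinarith [hd22]
    · have habs : dist (c1 (π t) * x.2.1 + c2 (π t) * x.1) (c1 (π t) * y.2.1 + c2 (π t) * y.1)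
          = |c1 (π t) * (x.2.1 - y.2.1) + c2 (π t) * (x.1 - y.1)| := by
        rw [Real.dist_eq]; ring_nf
      rw [habs]
      have h1' : |c1 (π t) * (x.2.1 - y.2.1) + c2 (π t) * (x.1 - y.1)|
          ≤ |c1 (π t)| * |x.2.1 - y.2.1| + |c2 (π t)| * |x.1 - y.1| := by
        exact (abs_add_le _ _).trans (add_le_add (abs_mul (c1 (π t)) (x.2.1 - y.2.1)).le
          (abs_mul (c2 (π t)) (x.1 - y.1)).le)
      have e1 : |x.2.1 - y.2.1| ≤ dist x y := by rw [← Real.dist_eq]; exact hd21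
      have e2 : |x.1 - y.1| ≤ dist x y := by rw [← Real.dist_eq]; exact hd1'
      have b1 := hC1 _ (hπmem t)
      have b2 := hC2 _ (hπmem t)
      nlinarith [abs_nonneg (c1 (π t)), abs_nonneg (c2 (π t)),
        abs_nonneg (x.2.1 - y.2.1), abs_nonneg (x.1 - y.1)]
  -- the two solutions
  set F : ℝ → ℝ × ℝ × ℝ := fun t => (s t, deriv s t, deriv (deriv s) t) with hF_def
  have haIoo : a ∈ Ioo lo hi := ⟨by simp only [hlo]; linarith, by simp only [hhi]; linarith⟩
  have hF' : ∀ t ∈ Ioo lo hi,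
      HasDerivAt F (v t (F t)) t ∧ F t ∈ (univ : Set (ℝ × ℝ × ℝ)) := by
    intro t ht
    have htIcc : t ∈ Icc lo hi := Ioo_subset_Icc_self ht
    have htI : t ∈ I := hIccI htIcc
    have hwt : w t = 0 := (hball t (hIcc_ball htIcc)).1
    refine ⟨?_, trivial⟩
    have hd : HasDerivAt F (deriv s t, deriv (deriv s) t, deriv (deriv (deriv s)) t) t :=
      (hdiffs t htI).prodMk ((hdiff1 t htI).prodMk (hdiff2 t htI))
    have hvF : v t (F t) = (deriv s t, deriv (deriv s) t, deriv (deriv (deriv s)) t) := by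
      simp only [hv_def, hF_def, hπid t htIcc]
      refine Prod.ext rfl (Prod.ext rfl ?_)
      simp only [hw_def] at hwt
      simp only [hc1, hc2]
      linear_combination (-1 / 2 : ℝ) * hwt
    rw [hvF]
    exact hd
  have hG' : ∀ t ∈ Ioo lo hi,
      HasDerivAt (fun _ : ℝ => ((0 : ℝ), (0 : ℝ), (0 : ℝ))) (v t ((0 : ℝ), (0 : ℝ), (0 : ℝ))) t ∧
        ((0 : ℝ), (0 : ℝ), (0 : ℝ)) ∈ (univ : Set (ℝ × ℝ × ℝ)) := by
    intro t ht
    refine ⟨?_, trivial⟩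
    have : v t ((0 : ℝ), (0 : ℝ), (0 : ℝ)) = ((0 : ℝ), (0 : ℝ), (0 : ℝ)) := by
      simp [hv_def]
    rw [this]
    exact hasDerivAt_const t _
  have hFa : F a = ((0 : ℝ), (0 : ℝ), (0 : ℝ)) := by
    simp only [hF_def, h0, h1, h2]
  have huniq : EqOn F (fun _ : ℝ => ((0 : ℝ), (0 : ℝ), (0 : ℝ))) (Ioo lo hi) :=
    ODE_solution_unique_of_mem_Ioo (fun t _ => (hlip t).lipschitzOnWith) haIoo hF' hG' hFa
  filter_upwards [isOpen_Ioo.mem_nhds haIoo] with t ht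
  exact congrArg Prod.fst (huniq ht)
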